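/- For all probability distributions P, Q ∈ Γ_n, (1/2)Δ(P||Q) ≤ D(Q||P) ≤ χ²(Q||P), where Δ(P||Q) = ∑(p_i−q_i)²/(p_i+q_i), D(Q||P) = ∑(q_i−p_i)·ln((p_i+q_i)/(2p_i)), and χ²(Q||P) = ∑(q_i−p_i)²/p_i. -/
import Mathlib

lemma key_pt (p q : ℝ) (hp : 0 < p) (hq : 0 < q) :
    (1/2) * ((p - q)^2 / (p + q)) ≤ (q - p) * Real.log ((p + q) / (2*p)) ∧
    (q - p) * Real.log ((p + q) / (2*p)) ≤ (q - p)^2 / p := by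
  have hpq : 0 < p + q := by linarith
  have h2p : 0 < 2 * p := by linarith
  set L := Real.log ((p + q) / (2*p)) with hL
  have hub : L ≤ (p + q) / (2*p) - 1 :=
    Real.log_le_sub_one_of_pos (by positivity)
  have hneg : Real.log ((2*p) / (p + q)) = -L := by
    rw [hL, ← Real.log_inv]; congr 1; field_simp
  have hlb0 := Real.log_le_sub_one_of_pos (show (0:ℝ) < (2*p)/(p+q) by positivity)
  rw [hneg] at hlb0
  have hub' : 2 * p * L ≤ q - p := by
    have := mul_le_mul_of_nonneg_left hub (le_of_lt h2p)
    have e : 2 * p * ((p + q) / (2*p) - 1) = q - p := by field_simp; ring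
    linarith [e ▸ this]
  have hlb' : q - p ≤ (p + q) * L := by
    have := mul_le_mul_of_nonneg_left hlb0 (le_of_lt hpq)
    have e : (p + q) * ((2*p)/(p+q) - 1) = p - q := by field_simp; ring
    nlinarith [this]
  constructor
  · rw [show (1/2 : ℝ) * ((p - q)^2 / (p + q)) = ((1/2) * (p-q)^2) / (p+q) by ring,
        div_le_iff₀ hpq]
    rcases le_total p q with h | h
    · nlinarith [mul_le_mul_of_nonneg_left hlb' (sub_nonneg.2 h)]
    · nlinarith [mul_le_mul_of_nonpos_left hub' (by linarith : q - p ≤ 0), sq_nonneg (q-p)]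
  · rw [le_div_iff₀ hp]
    rcases le_total p q with h | h
    · nlinarith [mul_le_mul_of_nonneg_left hub' (sub_nonneg.2 h), sq_nonneg (q-p)]
    · nlinarith [mul_le_mul_of_nonpos_left hlb' (by linarith : q - p ≤ 0),
        mul_le_mul_of_nonpos_left hub' (by linarith : q - p ≤ 0), sq_nonneg (q-p)]

theorem triangular_relJ_chisq_ineq (n : ℕ) (hn : 2 ≤ n) (p q : Fin n → ℝ)
    (hp : ∀ i, 0 < p i) (hq : ∀ i, 0 < q i)
    (hps : ∑ i, p i = 1) (hqs : ∑ i, q i = 1) :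
    (1 / 2) * (∑ i, (p i - q i) ^ 2 / (p i + q i)) ≤
      (∑ i, (q i - p i) * Real.log ((p i + q i) / (2 * p i))) ∧
    (∑ i, (q i - p i) * Real.log ((p i + q i) / (2 * p i))) ≤
      ∑ i, (q i - p i) ^ 2 / p i := by
  constructor
  · rw [Finset.mul_sum]
    exact Finset.sum_le_sum fun i _ => (key_pt (p i) (q i) (hp i) (hq i)).1
  · exact Finset.sum_le_sum fun i _ => (key_pt (p i) (q i) (hp i) (hq i)).2
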